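/- Let θ ∈ ℝ be such that θ/π is irrational, and let a, b ∈ ℝ with (a, b) ≠ (0, 0). Then there exist a constant c > 0 and infinitely many positive integers n such that sin(nθ) > c and |a − b·cot(nθ)| > c. -/

import Mathlib

open Real Set

/-- The subgroup generated by `θ` and `2π` is dense when `θ/π` is irrational. -/
lemma aux_dense_closure (θ : ℝ) (hθ : Irrational (θ / Real.pi)) :
    Dense ((AddSubgroup.closure {θ, 2 * Real.pi} : AddSubgroup ℝ) : Set ℝ) := by
  rcases (AddSubgroup.closure {θ, 2 * Real.pi}).dense_or_cyclic with h | ⟨a0, hS⟩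
  · exact h
  · exfalso
    have hθmem : θ ∈ AddSubgroup.closure ({θ, 2 * Real.pi} : Set ℝ) :=
      AddSubgroup.subset_closure (by simp)
    have hpmem : 2 * Real.pi ∈ AddSubgroup.closure ({θ, 2 * Real.pi} : Set ℝ) :=
      AddSubgroup.subset_closure (by simp)
    rw [hS, AddSubgroup.mem_closure_singleton] at hθmem hpmem
    obtain ⟨n, hn⟩ := hθmem
    obtain ⟨m, hm⟩ := hpmem
    simp only [zsmul_eq_mul] at hn hm
    have hm0 : (m : ℝ) ≠ 0 := by
      rintro h
      rw [h, zero_mul] at hm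
      have := Real.two_pi_pos; linarith
    have hπ : Real.pi ≠ 0 := Real.pi_ne_zero
    refine hθ ⟨(2 * n) / m, ?_⟩
    have key : θ * m = n * (2 * Real.pi) := by
      rw [← hm, ← hn]; ring
    push_cast
    rw [div_eq_div_iff (by exact_mod_cast hm0) hπ]
    linarith [key]

/-- Choice of a good target interval. -/
lemma aux_interval (a b : ℝ) (hab : (a, b) ≠ (0, 0)) :
    ∃ c u v : ℝ, 0 < c ∧ 0 < u ∧ u < v ∧ v < Real.pi ∧
      ∀ x : ℝ, u < x → x < v →
        c < Real.sin x ∧ c < |a - b * (Real.cos x / Real.sin x)| := by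
  have hπ := Real.pi_pos
  have hsqrt2 : (1 : ℝ) < Real.sqrt 2 := by
    rw [show (1:ℝ) = Real.sqrt 1 from (Real.sqrt_one).symm]
    exact Real.sqrt_lt_sqrt (by norm_num) (by norm_num)
  rcases eq_or_ne b 0 with rfl | hb
  · have ha : a ≠ 0 := by simpa using hab
    refine ⟨min (1/2) (|a|/2), Real.pi/4, Real.pi/2,
      lt_min (by norm_num) (half_pos (abs_pos.2 ha)), by positivity, by linarith,
      by linarith, fun x hx1 hx2 => ?_⟩
    constructor
    · have hmono : Real.sin (Real.pi/4) < Real.sin x :=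
        Real.strictMonoOn_sin ⟨by linarith, by linarith⟩ ⟨by linarith, by linarith⟩ hx1
      rw [Real.sin_pi_div_four] at hmono
      have : min (1/2 : ℝ) (|a|/2) ≤ 1/2 := min_le_left _ _
      nlinarith
    · have : min (1/2 : ℝ) (|a|/2) ≤ |a|/2 := min_le_right _ _
      have ha' : 0 < |a| := abs_pos.2 ha
      simp only [zero_mul, sub_zero]
      linarith
  · -- b ≠ 0
    set v : ℝ := min (Real.pi/4) (|b| / (2 * (|a| + 1))) with hv
    have hb' : 0 < |b| := abs_pos.2 hb
    have hv0 : 0 < v := lt_min (by positivity) (by positivity)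
    have hv4 : v ≤ Real.pi/4 := min_le_left _ _
    have hvb : v ≤ |b| / (2 * (|a| + 1)) := min_le_right _ _
    have hsinu : 0 < Real.sin (v/2) :=
      Real.sin_pos_of_pos_of_lt_pi (by positivity) (by linarith)
    refine ⟨min (Real.sin (v/2)) 1 / 2, v/2, v, half_pos (lt_min hsinu one_pos),
      by positivity, by linarith, by linarith, fun x hx1 hx2 => ?_⟩
    have hx0 : 0 < x := lt_trans (by positivity) hx1
    have hsinx : 0 < Real.sin x := Real.sin_pos_of_pos_of_lt_pi hx0 (by linarith)
    constructor
    · have hmono : Real.sin (v/2) < Real.sin x :=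
        Real.strictMonoOn_sin ⟨by linarith, by linarith⟩ ⟨by linarith, by linarith⟩ hx1
      have : min (Real.sin (v/2)) 1 ≤ Real.sin (v/2) := min_le_left _ _
      linarith
    · -- cos x > 1/2
      have hcos : Real.sqrt 2 / 2 < Real.cos x := by
        have := Real.strictAntiOn_cos ⟨hx0.le, by linarith⟩
          ⟨by linarith, by linarith⟩ (lt_of_lt_of_le hx2 hv4)
        rwa [Real.cos_pi_div_four] at this
      have hcoshalf : (1/2 : ℝ) < Real.cos x := by nlinarith
      have hsinlt : Real.sin x < |b| / (2 * (|a| + 1)) :=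
        lt_of_lt_of_le (lt_of_lt_of_le (Real.sin_lt hx0) hx2.le) hvb
      have h1 : (|a| + 1) * Real.sin x < |b| / 2 := by
        have h2 : (|a| + 1) * Real.sin x < (|a| + 1) * (|b| / (2 * (|a| + 1))) := by
          apply mul_lt_mul_of_pos_left hsinlt (by positivity)
        have h3 : (|a| + 1) * (|b| / (2 * (|a| + 1))) = |b| / 2 := by
          field_simp
        linarith
      have hq : |a| + 1 < |b| * (Real.cos x / Real.sin x) := by
        rw [show |b| * (Real.cos x / Real.sin x) = (|b| * Real.cos x) / Real.sin x by ring,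
          lt_div_iff₀ hsinx]
        nlinarith [h1, hcoshalf, hb']
      have hqpos : 0 < Real.cos x / Real.sin x := div_pos (by linarith) hsinx
      have habs : |b * (Real.cos x / Real.sin x)| - |a| ≤
          |a - b * (Real.cos x / Real.sin x)| := by
        rw [abs_sub_comm]
        exact abs_sub_abs_le_abs_sub _ _
      rw [abs_mul, abs_of_pos hqpos] at habs
      have hcle : min (Real.sin (v/2)) 1 / 2 ≤ 1/2 := by
        have : min (Real.sin (v/2)) 1 ≤ 1 := min_le_right _ _
        linarith
      linarith

/-- Periodicity reduction. -/
lemma aux_mem (a b θ c u v : ℝ)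
    (hJ : ∀ x : ℝ, u < x → x < v →
      c < Real.sin x ∧ c < |a - b * (Real.cos x / Real.sin x)|)
    (n : ℕ) (x : ℝ) (q : ℤ) (hx1 : u < x) (hx2 : x < v)
    (heq : (n : ℝ) * θ = x + q * (2 * Real.pi)) :
    c < Real.sin (n * θ) ∧ c < |a - b * (Real.cos (n * θ) / Real.sin (n * θ))| := by
  rw [heq, Real.sin_add_int_mul_two_pi, Real.cos_add_int_mul_two_pi]
  exact hJ x hx1 hx2

theorem stmt_2 (θ a b : ℝ) (hθ : Irrational (θ / Real.pi)) (hab : (a, b) ≠ (0, 0)) :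
    ∃ c > 0, {n : ℕ | 0 < n ∧ c < Real.sin (n * θ) ∧
      c < |a - b * (Real.cos (n * θ) / Real.sin (n * θ))|}.Infinite := by
  have hπ := Real.pi_pos
  obtain ⟨c, u, v, hc, hu, huv, hvπ, hJ⟩ := aux_interval a b hab
  set δ : ℝ := (v - u) / 2 with hδdef
  have hδ : 0 < δ := by simp only [hδdef]; linarith
  have hδ2π : δ < 2 * Real.pi := by simp only [hδdef]; linarith
  obtain ⟨g, hgS, hg⟩ := (aux_dense_closure θ hθ).exists_mem_open
    (isOpen_Ioo : IsOpen (Ioo (0:ℝ) δ))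
    ⟨δ/2, Set.mem_Ioo.mpr ⟨by positivity, by linarith⟩⟩
  have hgS' : g ∈ AddSubgroup.closure ({θ, 2 * Real.pi} : Set ℝ) := hgS
  rw [AddSubgroup.mem_closure_pair] at hgS'
  obtain ⟨m, k, hmk⟩ := hgS'
  simp only [zsmul_eq_mul] at hmk
  have hg0 : 0 < g := hg.1
  have hgδ : g < δ := hg.2
  have hm : m ≠ 0 := by
    rintro rfl
    simp only [Int.cast_zero, zero_mul, zero_add] at hmk
    have hk0 : (0:ℝ) < (k:ℝ) * (2 * Real.pi) := hmk ▸ hg0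
    have hkpos : 0 < k := by
      by_contra h
      push_neg at h
      have : (k:ℝ) ≤ 0 := by exact_mod_cast h
      nlinarith
    have : (1:ℝ) ≤ (k:ℝ) := by exact_mod_cast hkpos
    nlinarith
  refine ⟨c, hc, Set.infinite_of_forall_exists_gt fun N => ?_⟩
  have hstep : ∀ t : ℝ, 0 ≤ t → ∃ j : ℕ, t < (j:ℝ) * g ∧ (j:ℝ) * g < t + δ := by
    intro t ht0
    refine ⟨⌊t / g⌋₊ + 1, ?_, ?_⟩
    · have h := Nat.lt_floor_add_one (t / g)
      rw [div_lt_iff₀ hg0] at h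
      calc t < (⌊t / g⌋₊ + 1 : ℝ) * g := h
        _ = ((⌊t / g⌋₊ + 1 : ℕ):ℝ) * g := by push_cast; ring
    · have hfl : (⌊t / g⌋₊ : ℝ) ≤ t / g := Nat.floor_le (by positivity)
      have h2 : ((⌊t / g⌋₊ + 1 : ℕ):ℝ) ≤ t / g + 1 := by push_cast; linarith
      have h3 : (t / g + 1) * g = t + g := by field_simp
      nlinarith
  have hN0 : (0:ℝ) ≤ (N:ℝ) := Nat.cast_nonneg N
  have hNp : ((N+1:ℕ):ℝ) = (N:ℝ) + 1 := by push_cast; ring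
  rcases hm.lt_or_gt with hmneg | hmpos
  · -- m < 0
    obtain ⟨j, hjg1, hjg2⟩ := hstep (2 * Real.pi * ((N+1:ℕ):ℝ) - v)
      (by rw [hNp]; nlinarith)
    have hmcast : ((-m).toNat : ℝ) = -(m:ℝ) := by
      have h : ((-m).toNat : ℤ) = -m := Int.toNat_of_nonneg (by omega)
      exact_mod_cast h
    have hmem := aux_mem a b θ c u v hJ (j * (-m).toNat)
      (2 * Real.pi * ((N+1:ℕ):ℝ) - (j:ℝ) * g) ((j:ℤ) * k - ((N+1:ℕ):ℤ))
      (by linarith [hδdef]) (by linarith)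
      (by push_cast [hmcast]; linear_combination (-(j:ℝ)) * hmk)
    have hjN : N < j := by
      have hjr : (N:ℝ) < (j:ℝ) := by
        rw [hNp] at hjg1
        nlinarith
      exact_mod_cast hjr
    have htn : 1 ≤ (-m).toNat := by omega
    have hNn : N < j * (-m).toNat := lt_of_lt_of_le hjN (Nat.le_mul_of_pos_right j (by omega))
    exact ⟨j * (-m).toNat, ⟨by omega, hmem.1, hmem.2⟩, hNn⟩
  · -- m > 0
    obtain ⟨j, hjg1, hjg2⟩ := hstep (u + 2 * Real.pi * ((N+1:ℕ):ℝ))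
      (by rw [hNp]; nlinarith)
    have hmcast : (m.toNat : ℝ) = (m:ℝ) := by
      have h : (m.toNat : ℤ) = m := Int.toNat_of_nonneg (by omega)
      exact_mod_cast h
    have hmem := aux_mem a b θ c u v hJ (j * m.toNat)
      ((j:ℝ) * g - 2 * Real.pi * ((N+1:ℕ):ℝ)) (((N+1:ℕ):ℤ) - (j:ℤ) * k)
      (by linarith) (by linarith [hδdef])
      (by push_cast [hmcast]; linear_combination (j:ℝ) * hmk)
    have hjN : N < j := by
      have hjr : (N:ℝ) < (j:ℝ) := by
        rw [hNp] at hjg1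
        nlinarith
      exact_mod_cast hjr
    have htn : 1 ≤ m.toNat := by omega
    have hNn : N < j * m.toNat := lt_of_lt_of_le hjN (Nat.le_mul_of_pos_right j (by omega))
    exact ⟨j * m.toNat, ⟨by omega, hmem.1, hmem.2⟩, hNn⟩
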